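/- Let d ≥ 4 be an even integer and s ≥ 1 an integer. Then in the polynomial ring ℝ[v_1, …, v_m], the polynomial (Σ_{i=1}^m v_i^{(d−2)s})·(Σ_{i=1}^m v_i²)^s − (Σ_{i=1}^m v_i^d)^s is a sum of squares. (Equivalently, with k = (d−2)s: (‖v‖_d^d)^{k/(d−2)} ⪯ ‖v‖_k^k·(‖v‖_2^2)^{k/(d−2)} as polynomials.) -/

import Mathlib

open MvPolynomial

/-- A polynomial is a sum of squares if it is a finite sum of squares of polynomials. -/
def IsSOS {σ : Type*} (p : MvPolynomial σ ℝ) : Prop :=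
  ∃ (r : ℕ) (q : Fin r → MvPolynomial σ ℝ), p = ∑ i, q i ^ 2

section Aux

variable {R : Type*} [CommRing R]

lemma sos_mul_self (a : R) {q : R} (hq : IsSumSq q) : IsSumSq (a * a * q) := by
  induction hq with
  | zero => simpa using IsSumSq.zero
  | @sq_add b T pT ih =>
    have h : a * a * (b * b + T) = (a * b) * (a * b) + a * a * T := by ring
    rw [h]; exact IsSumSq.sq_add _ ih

lemma sos_mul {p q : R} (hp : IsSumSq p) (hq : IsSumSq q) : IsSumSq (p * q) := by
  induction hp with
  | zero => simpa using IsSumSq.zero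
  | @sq_add a S pS ih => rw [add_mul]; exact (sos_mul_self a hq).add ih

lemma sos_sq (a : R) : IsSumSq (a ^ 2) := by
  have : a ^ 2 = a * a + 0 := by ring
  rw [this]; exact IsSumSq.sq_add _ IsSumSq.zero

lemma sos_one : IsSumSq (1 : R) := by
  have : (1 : R) = 1 * 1 + 0 := by ring
  rw [this]; exact IsSumSq.sq_add _ IsSumSq.zero

lemma sos_pow {p : R} (hp : IsSumSq p) (n : ℕ) : IsSumSq (p ^ n) := by
  induction n with
  | zero => simpa using sos_one
  | succ n ih => rw [pow_succ]; exact sos_mul ih hp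

lemma sos_sum {ι : Type*} (t : Finset ι) (f : ι → R) (h : ∀ i ∈ t, IsSumSq (f i)) :
    IsSumSq (∑ i ∈ t, f i) := by
  induction t using Finset.cons_induction with
  | empty => simpa using IsSumSq.zero
  | cons i t hit ih =>
    rw [Finset.sum_cons]
    exact (h i (by simp)).add (ih fun j hj => h j (by simp [hj]))

lemma sos_geom (x y : R) (n : ℕ) :
    IsSumSq (∑ i ∈ Finset.range n, (x ^ 2) ^ i * (y ^ 2) ^ (n - 1 - i)) := by
  refine sos_sum _ _ fun i _ => ?_
  have : (x ^ 2) ^ i * (y ^ 2) ^ (n - 1 - i) = (x ^ i * y ^ (n - 1 - i)) ^ 2 := by ring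
  rw [this]; exact sos_sq _

/-- The key pair inequality: for any `u w` and even exponents,
`u^(e+b) w^2 + w^(e+b) u^2 - u^b w^(e+2) - w^b u^(e+2)` is a sum of squares,
where `e = 2p`, `b = 2q+2`. -/
lemma pair_sos (u w : R) (p q : ℕ) :
    IsSumSq (u ^ (2*p + (2*q+2)) * w ^ 2 + w ^ (2*p + (2*q+2)) * u ^ 2 -
      (u ^ (2*q+2) * w ^ (2*p+2) + w ^ (2*q+2) * u ^ (2*p+2))) := by
  set A := ∑ i ∈ Finset.range p, (u ^ 2) ^ i * (w ^ 2) ^ (p - 1 - i) with hAdef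
  set B := ∑ i ∈ Finset.range q, (u ^ 2) ^ i * (w ^ 2) ^ (q - 1 - i) with hBdef
  have hA : A * (u ^ 2 - w ^ 2) = u ^ (2*p) - w ^ (2*p) := by
    rw [hAdef, pow_mul, pow_mul]; exact geom_sum₂_mul _ _ p
  have hB : B * (u ^ 2 - w ^ 2) = u ^ (2*q) - w ^ (2*q) := by
    rw [hBdef, pow_mul, pow_mul]; exact geom_sum₂_mul _ _ q
  have key : u ^ (2*p + (2*q+2)) * w ^ 2 + w ^ (2*p + (2*q+2)) * u ^ 2 -
      (u ^ (2*q+2) * w ^ (2*p+2) + w ^ (2*q+2) * u ^ (2*p+2))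
      = ((u ^ 2 - w ^ 2) * (u * w)) * ((u ^ 2 - w ^ 2) * (u * w)) * (A * B) := by
    calc u ^ (2*p + (2*q+2)) * w ^ 2 + w ^ (2*p + (2*q+2)) * u ^ 2 -
        (u ^ (2*q+2) * w ^ (2*p+2) + w ^ (2*q+2) * u ^ (2*p+2))
        = (u ^ (2*p) - w ^ (2*p)) * ((u * w) * (u * w)) * (u ^ (2*q) - w ^ (2*q)) := by ring
      _ = (A * (u ^ 2 - w ^ 2)) * ((u * w) * (u * w)) * (B * (u ^ 2 - w ^ 2)) := by rw [hA, hB]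
      _ = _ := by ring
  rw [key]
  exact sos_mul_self _ (sos_mul (sos_geom u w p) (sos_geom u w q))

end Aux

/-- Power sum `∑ i, X i ^ k` in `ℝ[v₁,…,v_m]`. -/
noncomputable def PS (m k : ℕ) : MvPolynomial (Fin m) ℝ := ∑ i : Fin m, X i ^ k

lemma sos_C_mul {σ : Type*} {c : ℝ} (hc : 0 ≤ c) {p : MvPolynomial σ ℝ}
    (hp : IsSumSq p) : IsSumSq (C c * p) := by
  induction hp with
  | zero => simpa using IsSumSq.zero
  | @sq_add a S pS ih =>
    have h : (C c : MvPolynomial σ ℝ) * (a * a + S)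
        = (C (Real.sqrt c) * a) * (C (Real.sqrt c) * a) + C c * S := by
      rw [mul_add, mul_mul_mul_comm, ← C_mul, Real.mul_self_sqrt hc]
    rw [h]; exact IsSumSq.sq_add _ ih

lemma sum_pow_mul (m a c : ℕ) :
    (∑ i : Fin m, ∑ j : Fin m, (X i : MvPolynomial (Fin m) ℝ) ^ a * X j ^ c)
      = PS m a * PS m c := by
  rw [PS, PS, Finset.sum_mul]
  exact Finset.sum_congr rfl fun i _ => (Finset.mul_sum _ _ _).symm

lemma sum_pow_mul' (m a c : ℕ) :
    (∑ i : Fin m, ∑ j : Fin m, (X j : MvPolynomial (Fin m) ℝ) ^ a * X i ^ c)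
      = PS m a * PS m c := by
  rw [Finset.sum_comm]; exact sum_pow_mul m a c

lemma Rtotal (m p b : ℕ) (hb2 : 2 ≤ b) (hbe : Even b) :
    IsSumSq (PS m (2*p + b) * PS m 2 - PS m b * PS m (2*p+2)) := by
  obtain ⟨q, rfl⟩ : ∃ q, b = 2*q+2 := by
    obtain ⟨t, ht⟩ := hbe; exact ⟨t - 1, by omega⟩
  have hds : (∑ i : Fin m, ∑ j : Fin m,
      ((X i : MvPolynomial (Fin m) ℝ) ^ (2*p + (2*q+2)) * X j ^ 2
        + X j ^ (2*p + (2*q+2)) * X i ^ 2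
        - (X i ^ (2*q+2) * X j ^ (2*p+2) + X j ^ (2*q+2) * X i ^ (2*p+2))))
      = 2 * (PS m (2*p + (2*q+2)) * PS m 2 - PS m (2*q+2) * PS m (2*p+2)) := by
    simp only [Finset.sum_add_distrib, Finset.sum_sub_distrib, sum_pow_mul, sum_pow_mul']
    ring
  have hhalf : PS m (2*p + (2*q+2)) * PS m 2 - PS m (2*q+2) * PS m (2*p+2)
      = C (1/2 : ℝ) * (∑ i : Fin m, ∑ j : Fin m,
        ((X i : MvPolynomial (Fin m) ℝ) ^ (2*p + (2*q+2)) * X j ^ 2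
          + X j ^ (2*p + (2*q+2)) * X i ^ 2
          - (X i ^ (2*q+2) * X j ^ (2*p+2) + X j ^ (2*q+2) * X i ^ (2*p+2)))) := by
    rw [hds, ← mul_assoc]
    have h2 : (2 : MvPolynomial (Fin m) ℝ) = C 2 := by
      exact (map_ofNat (C : ℝ →+* MvPolynomial (Fin m) ℝ) 2).symm
    rw [h2, ← C_mul]
    norm_num
  rw [hhalf]
  exact sos_C_mul (by norm_num)
    (sos_sum _ _ fun i _ => sos_sum _ _ fun j _ => pair_sos _ _ _ _)

lemma sos_PS_even (m p : ℕ) : IsSumSq (PS m (2*p)) := by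
  rw [PS]
  refine sos_sum _ _ fun i _ => ?_
  have : (X i : MvPolynomial (Fin m) ℝ) ^ (2*p) = (X i ^ p) ^ 2 := by
    rw [← pow_mul]; ring_nf
  rw [this]; exact sos_sq _

lemma main_lem (m p : ℕ) (hp : 1 ≤ p) (s : ℕ) (hs : 1 ≤ s) :
    IsSumSq (PS m (2*p*s) * (PS m 2) ^ s - (PS m (2*p+2)) ^ s) := by
  induction s, hs using Nat.le_induction with
  | base =>
    rw [mul_one, pow_one, pow_one]
    have key : PS m (2*p) * PS m 2 - PS m (2*p+2)
        = ∑ i : Fin m, ((X i : MvPolynomial (Fin m) ℝ) ^ (2*p)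
            * ∑ j ∈ Finset.univ.erase i, (X j : MvPolynomial (Fin m) ℝ) ^ 2) := by
      rw [PS, PS, PS, Finset.sum_mul, ← Finset.sum_sub_distrib]
      refine Finset.sum_congr rfl fun i _ => ?_
      have h := Finset.add_sum_erase Finset.univ
        (fun j => (X j : MvPolynomial (Fin m) ℝ) ^ 2) (Finset.mem_univ i)
      have h' : (∑ j ∈ Finset.univ.erase i, (X j : MvPolynomial (Fin m) ℝ) ^ 2)
          = (∑ j : Fin m, (X j : MvPolynomial (Fin m) ℝ) ^ 2) - X i ^ 2 := by
        rw [← h]; ring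
      rw [h']; ring
    rw [key]
    refine sos_sum _ _ fun i _ => ?_
    have hx : (X i : MvPolynomial (Fin m) ℝ) ^ (2*p) = (X i ^ p) ^ 2 := by
      rw [← pow_mul]; ring_nf
    rw [hx]
    exact sos_mul (sos_sq _) (sos_sum _ _ fun j _ => sos_sq _)
  | succ s hs ih =>
    have hexp : 2*p*(s+1) = 2*p + 2*p*s := by ring
    rw [hexp]
    have key : PS m (2*p + 2*p*s) * PS m 2 ^ (s+1) - PS m (2*p+2) ^ (s+1)
        = PS m 2 ^ s * (PS m (2*p + 2*p*s) * PS m 2 - PS m (2*p*s) * PS m (2*p+2))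
          + PS m (2*p+2) * (PS m (2*p*s) * PS m 2 ^ s - PS m (2*p+2) ^ s) := by ring
    rw [key]
    have hR := Rtotal m p (2*p*s) (by nlinarith) ⟨p*s, by ring⟩
    have hP2 : IsSumSq (PS m 2) := by
      have := sos_PS_even m 1; simpa using this
    have hPd : IsSumSq (PS m (2*p+2)) := by
      have := sos_PS_even m (p+1)
      have h : 2*(p+1) = 2*p+2 := by ring
      rwa [h] at this
    exact (sos_mul (sos_pow hP2 s) hR).add (sos_mul hPd ih)

lemma isSOS_of_isSumSq {σ : Type*} {p : MvPolynomial σ ℝ} (hp : IsSumSq p) : IsSOS p := by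
  induction hp with
  | zero => exact ⟨0, fun i => 0, by simp⟩
  | @sq_add a S pS ih =>
    obtain ⟨r, q, hq⟩ := ih
    refine ⟨r + 1, Fin.cons a q, ?_⟩
    rw [Fin.sum_univ_succ]
    simp only [Fin.cons_zero, Fin.cons_succ]
    rw [← hq, sq]

/-- For even `d ≥ 4` and `s ≥ 1`, in `ℝ[v₁,…,v_m]` the polynomial
`(∑ i, v i ^ ((d-2)s)) (∑ i, v i ^ 2)^s - (∑ i, v i ^ d)^s` is a sum of squares,
i.e. `(‖v‖_d^d)^{k/(d-2)} ⪯ ‖v‖_k^k (‖v‖_2^2)^{k/(d-2)}` with `k = (d-2)s`. -/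
theorem stmt4 (m d s : ℕ) (hd : 4 ≤ d) (hdeven : Even d) (hs : 1 ≤ s) :
    IsSOS ((∑ i : Fin m, (X i : MvPolynomial (Fin m) ℝ) ^ ((d - 2) * s)) *
        (∑ i : Fin m, (X i : MvPolynomial (Fin m) ℝ) ^ 2) ^ s -
      (∑ i : Fin m, (X i : MvPolynomial (Fin m) ℝ) ^ d) ^ s) := by
  obtain ⟨t, ht⟩ := hdeven
  have h1 : d - 2 = 2 * (t - 1) := by omega
  have h2 : d = 2 * (t - 1) + 2 := by omega
  rw [h1, h2]
  apply isSOS_of_isSumSq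
  have := main_lem m (t - 1) (by omega) s hs
  simpa only [PS] using this
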